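/- Let q be an even prime power, let T_e (for e ∈ F_2) be the set of elements of F_{q^2} with absolute trace e, and let S_i ⊆ F_q (for i ∈ F_2) be the set of elements of F_q with absolute trace (over F_2, computed in F_q) equal to i. For λ ∈ F_{q^2}, λ ≠ 0, write μ = λ^q + λ. Then: if μ = 0 then |T_e ∩ λ·S_i| = (q/2)·[e = 0]; if μ = 1 then |T_e ∩ λ·S_i| = (q/2)·[e = i]; and if μ ∉ {0,1} then |T_e ∩ λ·S_i| = q/4. -/

import Mathlib

open scoped Classical

open Finset Polynomial

namespace Statement9Aux

variable {K : Type*} [Field K]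

/-- Partial trace: `x ↦ ∑_{j<r} x^{2^j}`. -/
def tr (r : ℕ) (x : K) : K := ∑ j ∈ Finset.range r, x ^ 2 ^ j

variable [CharP K 2]
set_option linter.unusedSectionVars false

lemma tr_add (r : ℕ) (x y : K) : tr r (x + y) = tr r x + tr r y := by
  haveI : Fact (Nat.Prime 2) := ⟨Nat.prime_two⟩
  rw [tr, tr, tr, ← Finset.sum_add_distrib]
  exact Finset.sum_congr rfl fun j _ => add_pow_char_pow x y 2 j

lemma tr_zero (r : ℕ) : tr r (0 : K) = 0 :=
  Finset.sum_eq_zero fun j _ => zero_pow (by positivity)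

lemma tr_sq {q r : ℕ} (hq : q = 2 ^ r) {s : K} (hs : s ^ q = s) :
    tr r s ^ 2 = tr r s := by
  haveI : Fact (Nat.Prime 2) := ⟨Nat.prime_two⟩
  have h1 : tr r s ^ 2 = ∑ j ∈ Finset.range r, s ^ 2 ^ (j + 1) := by
    rw [tr, sum_pow_char]
    exact Finset.sum_congr rfl fun j _ => by rw [← pow_mul, pow_succ]
  have tele := Finset.sum_range_sub (fun j => s ^ 2 ^ j) r
  have h2 : tr r s ^ 2 - tr r s = s ^ 2 ^ r - s ^ 2 ^ 0 := by
    rw [h1, tr, ← Finset.sum_sub_distrib]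
    exact tele
  rw [← hq, hs, pow_zero, pow_one, sub_self] at h2
  linear_combination h2

lemma tr_mem {q r : ℕ} (hq : q = 2 ^ r) {s : K} (hs : s ^ q = s) :
    tr r s = 0 ∨ tr r s = 1 := by
  have h := tr_sq hq hs
  have : tr r s * (tr r s - 1) = 0 := by ring_nf; linear_combination h
  rcases mul_eq_zero.mp this with h' | h'
  · exact Or.inl h'
  · exact Or.inr (sub_eq_zero.mp h')

/-- Full-trace identity: for `s` in `F_q`, the `2r`-fold trace of `λ s`
equals the `r`-fold trace of `(λ^q + λ) s`. -/
lemma tr2_eq {q r : ℕ} (hq : q = 2 ^ r) {lam s : K} (hs : s ^ q = s) :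
    ∑ j ∈ Finset.range (2 * r), (lam * s) ^ 2 ^ j = tr r ((lam ^ q + lam) * s) := by
  have h2r : 2 * r = r + r := by ring
  have key : ∀ j, (lam * s) ^ 2 ^ (r + j) = (lam ^ q * s) ^ 2 ^ j := fun j => by
    rw [pow_add, pow_mul, ← hq, mul_pow, hs]
  rw [h2r, Finset.sum_range_add]
  have h2 : ∑ j ∈ Finset.range r, (lam * s) ^ 2 ^ (r + j) = tr r (lam ^ q * s) := by
    rw [tr]; exact Finset.sum_congr rfl fun j _ => key j
  rw [h2, add_mul, tr_add]
  rw [add_comm]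
  rfl


/-- The set `{x : x^q = x}` has exactly `q` elements when `|K| = q²`. -/
lemma exists_F [Fintype K] {q r : ℕ} (hr : 1 ≤ r) (hq : q = 2 ^ r)
    (hK : Fintype.card K = q ^ 2) :
    ∃ F : Finset K, (∀ x, x ∈ F ↔ x ^ q = x) ∧ F.card = q := by
  haveI : Fact (Nat.Prime 2) := ⟨Nat.prime_two⟩
  have hq1 : 1 < q := by rw [hq]; exact Nat.one_lt_two_pow (by omega)
  set g : K[X] := X ^ q - X with hg
  have hg0 : g ≠ 0 := FiniteField.X_pow_card_sub_X_ne_zero K hq1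
  have hgdeg : g.natDegree = q := FiniteField.X_pow_card_sub_X_natDegree_eq K hq1
  have hsubpow : ∀ u v : K[X], (u - v) ^ q = u ^ q - v ^ q := fun u v => by
    rw [hq]; exact sub_pow_char_pow u v r
  have hgq : g ^ q = X ^ q ^ 2 - X ^ q := by
    rw [hg, hsubpow, ← pow_mul, ← Nat.pow_two]
  -- factorization X^{q²} - X = g * (g^{q-1} + 1)
  have hfac : (X ^ q ^ 2 - X : K[X]) = g * (g ^ (q - 1) + 1) := by
    have h1 : g * (g ^ (q - 1) + 1) = g ^ q + g := by
      rw [mul_add, mul_one, ← pow_succ']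
      congr 2
      omega
    rw [h1, hgq, hg]
    ring
  have hbig0 : (X ^ q ^ 2 - X : K[X]) ≠ 0 :=
    FiniteField.X_pow_card_sub_X_ne_zero K (by nlinarith)
  have hbig : (X ^ q ^ 2 - X : K[X]).roots = Finset.univ.val := by
    have := FiniteField.roots_X_pow_card_sub_X K
    rwa [hK] at this
  have hmul : (X ^ q ^ 2 - X : K[X]).roots = g.roots + (g ^ (q - 1) + 1).roots := by
    rw [hfac]; exact Polynomial.roots_mul (by rw [← hfac]; exact hbig0)
  have hdeg2 : (g ^ (q - 1) + 1 : K[X]).natDegree ≤ (q - 1) * q := by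
    refine le_trans (Polynomial.natDegree_add_le _ _) ?_
    simp only [Polynomial.natDegree_one, Polynomial.natDegree_pow, hgdeg]
    omega
  have hcard1 : Multiset.card g.roots ≤ q := hgdeg ▸ Polynomial.card_roots' g
  have hcard2 : Multiset.card (g ^ (q - 1) + 1 : K[X]).roots ≤ (q - 1) * q :=
    le_trans (Polynomial.card_roots' _) hdeg2
  have hsum : Multiset.card g.roots
      + Multiset.card (g ^ (q - 1) + 1 : K[X]).roots = q ^ 2 := by
    have h2 := congrArg Multiset.card hmul
    rw [hbig, Multiset.card_add] at h2
    have h3 : Multiset.card Finset.univ.val = Fintype.card K := rfl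
    omega
  have hq2 : q ^ 2 = q + (q - 1) * q := by
    obtain ⟨m, rfl⟩ : ∃ m, q = m + 1 := ⟨q - 1, by omega⟩
    simp [Nat.add_sub_cancel]
    ring
  have hcardg : Multiset.card g.roots = q := by omega
  have hle : g.roots ≤ Finset.univ.val := by
    rw [← hbig, hmul]; exact Multiset.le_add_right _ _
  have hnd : g.roots.Nodup := Multiset.nodup_of_le hle Finset.univ.nodup
  refine ⟨g.roots.toFinset, fun x => ?_, ?_⟩
  · rw [Multiset.mem_toFinset, Polynomial.mem_roots hg0]
    show g.eval x = 0 ↔ _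
    rw [hg]
    simp only [Polynomial.eval_sub, Polynomial.eval_pow, Polynomial.eval_X]
    exact sub_eq_zero
  · rw [Multiset.toFinset_card_of_nodup hnd]; exact hcardg

/-- There is `s ∈ F_q` with `tr r s = 1`. -/
lemma exists_tr_one [Fintype K] {q r : ℕ} (hr : 1 ≤ r) (hq : q = 2 ^ r)
    (F : Finset K) (hF : ∀ x, x ∈ F ↔ x ^ q = x) (hcard : F.card = q) :
    ∃ s : K, s ^ q = s ∧ tr r s = 1 := by
  set p : K[X] := ∑ j ∈ Finset.range r, X ^ 2 ^ j with hp
  have heval : ∀ x : K, p.eval x = tr r x := fun x => by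
    rw [hp, tr, Polynomial.eval_finset_sum]
    exact Finset.sum_congr rfl fun j _ => by rw [Polynomial.eval_pow, Polynomial.eval_X]
  have hcoeff : p.coeff (2 ^ (r - 1)) = 1 := by
    rw [hp, Polynomial.finset_sum_coeff]
    rw [Finset.sum_eq_single_of_mem (r - 1) (Finset.mem_range.mpr (by omega))]
    · rw [Polynomial.coeff_X_pow, if_pos rfl]
    · intro j hj hne
      rw [Polynomial.coeff_X_pow, if_neg]
      intro hcontra
      exact hne (Nat.pow_right_injective le_rfl hcontra.symm)
  have hp0 : p ≠ 0 := fun h => by simp [h] at hcoeff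
  have hdeg : p.natDegree ≤ 2 ^ (r - 1) :=
    Polynomial.natDegree_sum_le_of_forall_le _ _ fun j hj => by
      rw [Polynomial.natDegree_X_pow]
      exact Nat.pow_le_pow_right (by norm_num) (by have := Finset.mem_range.mp hj; omega)
  have hsub : F.filter (fun s => tr r s = 0) ⊆ p.roots.toFinset := by
    intro x hx
    rw [Finset.mem_filter] at hx
    rw [Multiset.mem_toFinset]
    refine Multiset.mem_toFinset.mp ?_
    rw [Multiset.mem_toFinset]
    exact Polynomial.mem_roots'.mpr ⟨hp0, by show p.eval x = 0; rw [heval x]; exact hx.2⟩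
  have hlt : (F.filter (fun s => tr r s = 0)).card < F.card := by
    have h1 : (F.filter (fun s => tr r s = 0)).card ≤ 2 ^ (r - 1) :=
      le_trans (Finset.card_le_card hsub)
        (le_trans (Multiset.toFinset_card_le _) (le_trans (Polynomial.card_roots' p) hdeg))
    have h2 : (2 : ℕ) ^ (r - 1) < 2 ^ r := Nat.pow_lt_pow_right (by norm_num) (by omega)
    rw [hcard, hq]
    omega
  obtain ⟨s, hsF, hs0⟩ : ∃ s ∈ F, tr r s ≠ 0 := by
    by_contra h
    push_neg at h
    have : F.filter (fun s => tr r s = 0) = F := Finset.filter_eq_self.mpr h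
    rw [this] at hlt
    exact lt_irrefl _ hlt
  exact ⟨s, (hF s).mp hsF, ((tr_mem hq ((hF s).mp hsF)).resolve_left hs0)⟩


lemma card_split01 {α : Type*} (G : Finset α) (f : α → K)
    (h : ∀ x ∈ G, f x = 0 ∨ f x = 1) :
    G.card = (G.filter fun s => f s = 0).card + (G.filter fun s => f s = 1).card := by
  classical
  rw [← Finset.card_filter_add_card_filter_not (p := fun s => f s = 0)]
  congr 2
  apply Finset.filter_congr
  intro x hx
  rcases h x hx with h0 | h1
  · simp [h0]
  · simp [h1]

/-- Four-way split of `F_q` according to the values of the two trace forms. -/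
lemma card_split4 {r : ℕ} (F : Finset K) (μ : K)
    (hf : ∀ x ∈ F, tr r (μ * x) = 0 ∨ tr r (μ * x) = 1)
    (hg : ∀ x ∈ F, tr r x = 0 ∨ tr r x = 1) :
    F.card = (F.filter fun s => tr r (μ * s) = 0 ∧ tr r s = 0).card
           + (F.filter fun s => tr r (μ * s) = 0 ∧ tr r s = 1).card
           + ((F.filter fun s => tr r (μ * s) = 1 ∧ tr r s = 0).card
           + (F.filter fun s => tr r (μ * s) = 1 ∧ tr r s = 1).card) := by
  classical
  rw [card_split01 F (fun x => tr r (μ * x)) hf]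
  rw [card_split01 (F.filter fun s => tr r (μ * s) = 0) (fun x => tr r x)
    (fun x hx => hg x (Finset.mem_of_mem_filter x hx))]
  rw [card_split01 (F.filter fun s => tr r (μ * s) = 1) (fun x => tr r x)
    (fun x hx => hg x (Finset.mem_of_mem_filter x hx))]
  simp only [Finset.filter_filter]

/-- Translating by an element of `F_q` with prescribed trace data is a bijection
between fibers. -/
lemma card_translate {q r : ℕ} (hq : q = 2 ^ r)
    (F : Finset K) (hF : ∀ x, x ∈ F ↔ x ^ q = x) (μ : K) (a b a₀ b₀ s₀ : K)
    (hs₀ : s₀ ^ q = s₀) (ha₀ : tr r (μ * s₀) = a₀) (hb₀ : tr r s₀ = b₀) :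
    (F.filter fun s => tr r (μ * s) = a ∧ tr r s = b).card
      = (F.filter fun s => tr r (μ * s) = a + a₀ ∧ tr r s = b + b₀).card := by
  classical
  haveI : Fact (Nat.Prime 2) := ⟨Nat.prime_two⟩
  have haddq : ∀ x y : K, x ^ q = x → y ^ q = y → (x + y) ^ q = x + y := by
    intro x y hx hy
    rw [hq] at hx hy ⊢
    rw [add_pow_char_pow, hx, hy]
  have hself : ∀ x : K, x + x = 0 := fun x => CharTwo.add_self_eq_zero x
  apply Finset.card_nbij' (fun s => s + s₀) (fun s => s + s₀)
  · intro s hs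
    rw [Finset.mem_coe, Finset.mem_filter] at hs ⊢
    obtain ⟨hsF, h1, h2⟩ := hs
    refine ⟨(hF _).mpr (haddq _ _ ((hF s).mp hsF) hs₀), ?_, ?_⟩
    · rw [mul_add, tr_add, h1, ha₀]
    · rw [tr_add, h2, hb₀]
  · intro s hs
    rw [Finset.mem_coe, Finset.mem_filter] at hs ⊢
    obtain ⟨hsF, h1, h2⟩ := hs
    refine ⟨(hF _).mpr (haddq _ _ ((hF s).mp hsF) hs₀), ?_, ?_⟩
    · rw [mul_add, tr_add, h1, ha₀, add_assoc, hself, add_zero]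
    · rw [tr_add, h2, hb₀, add_assoc, hself, add_zero]
  · intro s _; show s + s₀ + s₀ = s; rw [add_assoc, hself, add_zero]
  · intro s _; show s + s₀ + s₀ = s; rw [add_assoc, hself, add_zero]

end Statement9Aux

open Statement9Aux

/-- Let `q = 2^r` (`r ≥ 2`) and `K = F_{q²} ⊇ F_q`. For `e ∈ F₂`
let `T_e` be the set of elements of `K` of absolute trace `e` (trace to `F₂` being
`x ↦ ∑_{j<2r} x^{2^j}`), and for `i ∈ F₂` let `S_i ⊆ F_q` be the set of elements of
`F_q` of absolute trace `i` (computed in `F_q`, i.e. `x ↦ ∑_{j<r} x^{2^j}`).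
For `λ ≠ 0` with `μ = λ^q + λ`:
if `μ = 0` then `|T_e ∩ λ·S_i| = (q/2)·[e = 0]`; if `μ = 1` then
`|T_e ∩ λ·S_i| = (q/2)·[e = i]`; if `μ ∉ {0,1}` then `|T_e ∩ λ·S_i| = q/4`. -/
theorem card_trace_inter_scaled_hyperplane
    (q r : ℕ) (hr : 2 ≤ r) (hq : q = 2 ^ r)
    (K : Type*) [Field K] [Fintype K] (hK : Fintype.card K = q ^ 2)
    (e i : K) (he : e = 0 ∨ e = 1) (hi : i = 0 ∨ i = 1)
    (lam : K) (hlam : lam ≠ 0)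
    (T S : K → Set K)
    (hT : ∀ e', T e' = {x : K | ∑ j ∈ Finset.range (2 * r), x ^ 2 ^ j = e'})
    (hS : ∀ i', S i' = {x : K | x ^ q = x ∧ ∑ j ∈ Finset.range r, x ^ 2 ^ j = i'}) :
    (lam ^ q + lam = 0 →
      (T e ∩ (fun s => lam * s) '' S i).ncard = if e = 0 then q / 2 else 0) ∧
    (lam ^ q + lam = 1 →
      (T e ∩ (fun s => lam * s) '' S i).ncard = if e = i then q / 2 else 0) ∧
    (lam ^ q + lam ≠ 0 → lam ^ q + lam ≠ 1 →
      (T e ∩ (fun s => lam * s) '' S i).ncard = q / 4) := by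
  classical
  -- characteristic 2
  haveI hchar : CharP K 2 := by
    obtain ⟨p, hp⟩ := CharP.exists K
    haveI := hp
    have hprime : p.Prime := CharP.char_is_prime K p
    obtain ⟨n, -, hcard⟩ := FiniteField.card K p
    have hdvd : p ∣ 2 ^ (r * 2) := by
      have h1 : p ∣ p ^ (n : ℕ) := dvd_pow_self p n.pos.ne'
      rw [← hcard, hK, hq, ← pow_mul] at h1
      exact h1
    have hp2 : p = 2 :=
      (Nat.prime_dvd_prime_iff_eq hprime Nat.prime_two).mp (hprime.dvd_of_dvd_pow hdvd)
    rwa [hp2] at hp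
  haveI : Fact (Nat.Prime 2) := ⟨Nat.prime_two⟩
  set μ : K := lam ^ q + lam with hmu
  have hlamq2 : lam ^ q ^ 2 = lam := by rw [← hK]; exact FiniteField.pow_card lam
  have hmuq : μ ^ q = μ := by
    have h1 : (lam ^ q + lam) ^ q = (lam ^ q) ^ q + lam ^ q := by
      rw [hq]; exact add_pow_char_pow _ _ 2 r
    rw [hmu, h1, ← pow_mul, ← Nat.pow_two, hlamq2, add_comm]
  obtain ⟨F, hF, hFcard⟩ := exists_F (by omega) hq hK
  have haddF : ∀ {x y : K}, x ^ q = x → y ^ q = y → (x + y) ^ q = x + y := by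
    intro x y hx hy
    rw [hq] at hx hy ⊢
    rw [add_pow_char_pow, hx, hy]
  have hmulF : ∀ {x y : K}, x ^ q = x → y ^ q = y → (x * y) ^ q = x * y := by
    intro x y hx hy; rw [mul_pow, hx, hy]
  have hinvF : ∀ {x : K}, x ^ q = x → (x⁻¹) ^ q = x⁻¹ := by
    intro x hx; rw [inv_pow, hx]
  have hself : ∀ x : K, x + x = 0 := fun x => CharTwo.add_self_eq_zero x
  -- the intersection as an image of a fiber in F_q
  have hset : T e ∩ (fun s => lam * s) '' S i
      = (fun s => lam * s) ''
        ((F.filter fun s => tr r (μ * s) = e ∧ tr r s = i) : Set K) := by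
    ext x
    simp only [hT, hS, Set.mem_inter_iff, Set.mem_setOf_eq, Set.mem_image,
      Finset.coe_filter, Finset.mem_coe, Finset.mem_filter]
    constructor
    · rintro ⟨hx, s, ⟨hsq, htr⟩, rfl⟩
      refine ⟨s, ⟨(hF s).mpr hsq, ?_, htr⟩, rfl⟩
      rw [← tr2_eq hq hsq]
      exact hx
    · rintro ⟨s, ⟨hsF, htrμ, htr⟩, rfl⟩
      refine ⟨?_, s, ⟨(hF s).mp hsF, htr⟩, rfl⟩
      rw [tr2_eq hq ((hF s).mp hsF)]
      exact htrμ
  have hncard : (T e ∩ (fun s => lam * s) '' S i).ncard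
      = (F.filter fun s => tr r (μ * s) = e ∧ tr r s = i).card := by
    rw [hset, Set.ncard_image_of_injective _ (mul_right_injective₀ hlam),
      Set.ncard_coe_finset]
  -- the global count
  have htotal := card_split4 F μ
    (fun x hx => tr_mem hq (hmulF hmuq ((hF x).mp hx)))
    (fun x hx => tr_mem hq ((hF x).mp hx))
  rw [hFcard] at htotal
  -- an element of trace one
  obtain ⟨s₁, hs₁q, hs₁tr⟩ := exists_tr_one (by omega) hq F hF hFcard
  have hexists_mul : ∀ ν : K, ν ≠ 0 → ν ^ q = ν →
      ∃ s : K, s ^ q = s ∧ tr r (ν * s) = 1 := by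
    intro ν hν hνq
    refine ⟨ν⁻¹ * s₁, hmulF (hinvF hνq) hs₁q, ?_⟩
    rw [← mul_assoc, mul_inv_cancel₀ hν, one_mul, hs₁tr]
  refine ⟨fun h0 => ?_, fun h1 => ?_, fun h0 h1 => ?_⟩
  -- Case μ = 0
  · have hemp : ∀ b : K, (F.filter fun s => tr r (μ * s) = 1 ∧ tr r s = b).card = 0 := by
      intro b
      rw [Finset.card_eq_zero, Finset.filter_eq_empty_iff]
      rintro s hs ⟨h1, -⟩
      rw [h0, zero_mul, tr_zero] at h1
      exact zero_ne_one h1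
    have ha₀ : tr r (μ * s₁) = 0 := by rw [h0, zero_mul, tr_zero]
    have htr01 := card_translate hq F hF μ 0 0 0 1 s₁ hs₁q ha₀ hs₁tr
    simp only [zero_add] at htr01
    rw [hncard]
    have he10 := hemp (0 : K)
    have he11 := hemp (1 : K)
    rcases he with rfl | rfl
    · rw [if_pos rfl]
      rcases hi with rfl | rfl <;> omega
    · rw [if_neg one_ne_zero]
      rcases hi with rfl | rfl <;> omega
  -- Case μ = 1
  · have hemp01 : (F.filter fun s => tr r (μ * s) = 0 ∧ tr r s = 1).card = 0 := by
      rw [Finset.card_eq_zero, Finset.filter_eq_empty_iff]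
      rintro s hs ⟨ha, hb⟩
      rw [h1, one_mul, hb] at ha
      exact one_ne_zero ha
    have hemp10 : (F.filter fun s => tr r (μ * s) = 1 ∧ tr r s = 0).card = 0 := by
      rw [Finset.card_eq_zero, Finset.filter_eq_empty_iff]
      rintro s hs ⟨ha, hb⟩
      rw [h1, one_mul, hb] at ha
      exact zero_ne_one ha
    have ha₀ : tr r (μ * s₁) = 1 := by rw [h1, one_mul]; exact hs₁tr
    have htr11 := card_translate hq F hF μ 0 0 1 1 s₁ hs₁q ha₀ hs₁tr
    simp only [zero_add] at htr11
    rw [hncard]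
    rcases he with rfl | rfl <;> rcases hi with rfl | rfl
    · rw [if_pos rfl]; omega
    · rw [if_neg zero_ne_one]; omega
    · rw [if_neg one_ne_zero]; omega
    · rw [if_pos rfl]; omega
  -- Case μ ∉ {0, 1}
  · have hμ1 : μ + 1 ≠ 0 := by
      intro h
      apply h1
      have h2 : μ + 1 + 1 = μ := by rw [add_assoc, hself, add_zero]
      rw [← h2, h, zero_add]
    have hμ1q : (μ + 1) ^ q = μ + 1 := haddF hmuq (one_pow q)
    obtain ⟨s₂, hs₂q, hs₂tr⟩ := hexists_mul μ h0 hmuq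
    obtain ⟨s₃, hs₃q, hs₃tr⟩ := hexists_mul (μ + 1) hμ1 hμ1q
    have hs₃' : tr r (μ * s₃) + tr r s₃ = 1 := by
      rw [← tr_add, ← hs₃tr]
      congr 1
      ring
    have key : (∃ t : K, t ^ q = t ∧ tr r (μ * t) = 1 ∧ tr r t = 0) ∧
        (∃ t : K, t ^ q = t ∧ tr r (μ * t) = 0 ∧ tr r t = 1) := by
      rcases tr_mem hq (hmulF hmuq hs₃q) with hc | hc
      · have hd : tr r s₃ = 1 := by rw [hc, zero_add] at hs₃'; exact hs₃'
        refine ⟨?_, ⟨s₃, hs₃q, hc, hd⟩⟩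
        rcases tr_mem hq hs₂q with hd₂ | hd₂
        · exact ⟨s₂, hs₂q, hs₂tr, hd₂⟩
        · refine ⟨s₂ + s₃, haddF hs₂q hs₃q, ?_, ?_⟩
          · rw [mul_add, tr_add, hs₂tr, hc, add_zero]
          · rw [tr_add, hd₂, hd, hself]
      · have hd : tr r s₃ = 0 := by
          rw [hc] at hs₃'
          have := hs₃'
          nth_rewrite 2 [← add_zero (1 : K)] at this
          exact add_left_cancel this
        refine ⟨⟨s₃, hs₃q, hc, hd⟩, ?_⟩
        rcases tr_mem hq (hmulF hmuq hs₁q) with hc₁ | hc₁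
        · exact ⟨s₁, hs₁q, hc₁, hs₁tr⟩
        · refine ⟨s₁ + s₃, haddF hs₁q hs₃q, ?_, ?_⟩
          · rw [mul_add, tr_add, hc₁, hc, hself]
          · rw [tr_add, hs₁tr, hd, add_zero]
    obtain ⟨⟨t10, ht10q, ht10a, ht10b⟩, ⟨t01, ht01q, ht01a, ht01b⟩⟩ := key
    have htrA := card_translate hq F hF μ 0 0 1 0 t10 ht10q ht10a ht10b
    have htrB := card_translate hq F hF μ 0 0 0 1 t01 ht01q ht01a ht01b
    have htrC := card_translate hq F hF μ 0 1 1 0 t10 ht10q ht10a ht10b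
    simp only [zero_add, add_zero] at htrA htrB htrC
    rw [hncard]
    rcases he with rfl | rfl <;> rcases hi with rfl | rfl <;> omega
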